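/- Let p be a prime, d ≥ 1 an integer, F the free group on d generators, and F_2 = F^p[F,F]. Let U be a fully invariant subgroup of F with U ≤ F_2 such that H = F/U is a finite p-group. Then every automorphism of F/F_2 lifts to an automorphism of H: for each θ ∈ Aut(F/F_2) there exists θ'' ∈ Aut(H) such that the automorphism that θ'' induces on H/(F_2/U) ≅ F/F_2 equals θ. -/

import Mathlib

/-- `pStep p H = H^p [H, G]`: the subgroup generated by all `p`-th powers of elements of `H`
together with all commutators `[x, y]` with `x ∈ H` and `y ∈ G`. -/
def pStep (p : ℕ) {G : Type*} [Group G] (H : Subgroup G) : Subgroup G :=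
  Subgroup.closure ((fun g => g ^ p) '' (H : Set G)) ⊔ ⁅H, (⊤ : Subgroup G)⁆

private def lowerPSeriesAux (p : ℕ) (G : Type*) [Group G] : ℕ → Subgroup G
  | 0 => ⊤
  | (k + 1) => pStep p (lowerPSeriesAux p G k)

/-- The lower `p`-series of `G`, indexed as in the paper: `G_1 = G` and
`G_{i+1} = G_i^p [G_i, G]`.  (The value at `0` is junk, equal to `G_1 = G`.) -/
def lowerPSeries (p : ℕ) (G : Type*) [Group G] (i : ℕ) : Subgroup G :=
  lowerPSeriesAux p G (i - 1)

theorem pStep_le (p : ℕ) {G : Type*} [Group G] {H : Subgroup G} (hH : H.Normal) :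
    pStep p H ≤ H := by
  apply sup_le
  · rw [Subgroup.closure_le]
    rintro _ ⟨h, hh, rfl⟩
    exact H.pow_mem hh p
  · exact Subgroup.commutator_le_left H ⊤

theorem pStep_normal (p : ℕ) {G : Type*} [Group G] {H : Subgroup G} (hH : H.Normal) :
    (pStep p H).Normal := by
  constructor
  intro x hx g
  have hxH : x ∈ H := pStep_le p hH hx
  open scoped commutatorElement in
  have : g * x * g⁻¹ = ⁅g, x⁆ * x := by group
  rw [this]
  refine Subgroup.mul_mem _ ?_ hx
  refine le_sup_right (α := Subgroup G) ?_
  have hcomm : (⁅(⊤ : Subgroup G), H⁆ : Subgroup G) = ⁅H, (⊤ : Subgroup G)⁆ :=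
    Subgroup.commutator_comm ⊤ H
  rw [← hcomm]
  exact Subgroup.commutator_mem_commutator (Subgroup.mem_top g) hxH

instance lowerPSeries_normal (p : ℕ) (G : Type*) [Group G] (i : ℕ) :
    (lowerPSeries p G i).Normal := by
  rw [lowerPSeries]
  generalize i - 1 = k
  induction k with
  | zero => show (⊤ : Subgroup G).Normal; infer_instance
  | succ k ih => exact pStep_normal p ih

/-- A group is minimally generated by `d` elements if it is generated by some `d` elements
but by no fewer. -/
def MinGenBy (G : Type*) [Group G] (d : ℕ) : Prop :=
  (∃ S : Finset G, S.card = d ∧ Subgroup.closure (S : Set G) = ⊤) ∧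
    ∀ S : Finset G, Subgroup.closure (S : Set G) = ⊤ → d ≤ S.card

/-- A subgroup is fully invariant if every endomorphism of the group maps it into itself. -/
def FullyInvariant {G : Type*} [Group G] (U : Subgroup G) : Prop :=
  ∀ φ : G →* G, Subgroup.map φ U ≤ U

lemma pStep_top_le_coatom {p : ℕ} (hp : p.Prime) {G : Type*} [Group G] [Finite G]
    (hpg : IsPGroup p G) {M : Subgroup G} (hM : IsCoatom M) : pStep p (⊤ : Subgroup G) ≤ M := by
  haveI : Fact p.Prime := ⟨hp⟩
  haveI : Group.IsNilpotent G := hpg.isNilpotent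
  haveI hMn : M.Normal := by
    have := (isNilpotent_of_finite_tfae (G := G)).out 0 2
    exact this.mp ‹_› M hM
  set Q := G ⧸ M with hQdef
  haveI : Finite Q := Quotient.finite _
  have hQp : IsPGroup p Q := hpg.to_quotient M
  -- every subgroup of Q is ⊥ or ⊤
  have hsub : ∀ N : Subgroup Q, N = ⊥ ∨ N = ⊤ := by
    intro N
    have hsurj : Function.Surjective (QuotientGroup.mk' M) := QuotientGroup.mk'_surjective M
    have h1 : M ≤ N.comap (QuotientGroup.mk' M) := by
      intro x hx
      have : QuotientGroup.mk' M x = 1 := (QuotientGroup.eq_one_iff x).mpr hx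
      simpa [Subgroup.mem_comap, this] using N.one_mem
    have hNmap : Subgroup.map (QuotientGroup.mk' M) (N.comap (QuotientGroup.mk' M)) = N :=
      Subgroup.map_comap_eq_self_of_surjective hsurj N
    by_cases hc : N.comap (QuotientGroup.mk' M) = ⊤
    · right; rw [← hNmap, hc]; exact Subgroup.map_top_of_surjective _ hsurj
    · left
      have heq : N.comap (QuotientGroup.mk' M) = M := by
        rcases eq_or_lt_of_le h1 with h | h
        · exact h.symm
        · exact absurd (hM.2 _ h) hc
      rw [← hNmap, heq]
      rw [eq_bot_iff]
      rintro _ ⟨x, hx, rfl⟩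
      simp only [Subgroup.mem_bot]
      exact (QuotientGroup.eq_one_iff x).mpr hx
  -- Q is nontrivial
  obtain ⟨g₀, hg₀⟩ : ∃ g : G, (g : Q) ≠ 1 := by
    by_contra h
    push_neg at h
    exact hM.1 (by rw [eq_top_iff]; intro x _; exact (QuotientGroup.eq_one_iff x).mp (h x))
  set g : Q := (g₀ : Q) with hg
  have hgtop : Subgroup.zpowers g = ⊤ := by
    rcases hsub (Subgroup.zpowers g) with h | h
    · exact absurd (by simpa [h] using Subgroup.mem_zpowers g) hg₀
    · exact h
  -- g ^ p = 1
  have hgp : g ^ p = 1 := by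
    by_contra hne
    have htop : Subgroup.zpowers (g ^ p) = ⊤ := by
      rcases hsub (Subgroup.zpowers (g ^ p)) with h | h
      · exact absurd (by simpa [h] using Subgroup.mem_zpowers (g ^ p)) hne
      · exact h
    have hcard : orderOf (g ^ p) = Nat.card Q :=
      orderOf_eq_card_of_forall_mem_zpowers (by intro x; rw [htop]; trivial)
    have hdvd1 : orderOf g ∣ Nat.card Q := orderOf_dvd_natCard g
    have hdvd2 : orderOf (g ^ p) ∣ orderOf g := orderOf_pow_dvd p
    have heq : orderOf (g ^ p) = orderOf g :=
      Nat.dvd_antisymm hdvd2 (hcard ▸ hdvd1)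
    have hpdvd : p ∣ orderOf g := by
      obtain ⟨k, hk⟩ := hQp g
      have : orderOf g ∣ p ^ k := orderOf_dvd_of_pow_eq_one hk
      obtain ⟨m, -, hm⟩ := (Nat.dvd_prime_pow hp).mp this
      rcases Nat.eq_zero_or_pos m with rfl | hmpos
      · simp at hm
        exact absurd hm hg₀
      · exact hm ▸ dvd_pow_self p hmpos.ne'
    have hlt : orderOf (g ^ p) = orderOf g / p := by
      rw [orderOf_pow, Nat.gcd_comm, Nat.gcd_eq_left hpdvd]
    rw [heq] at hlt
    exact absurd hlt (Nat.ne_of_lt (Nat.div_lt_self (orderOf_pos g) hp.one_lt)).symm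
  -- consequences: exponent p and commutativity
  have hypow : ∀ y : Q, y ^ p = 1 := by
    intro y
    have : y ∈ Subgroup.zpowers g := by rw [hgtop]; trivial
    obtain ⟨k, rfl⟩ := this
    rw [← zpow_natCast, ← zpow_mul, mul_comm, zpow_mul, zpow_natCast, hgp, one_zpow]
  have hcomm : ∀ a b : Q, a * b = b * a := by
    haveI : IsCyclic Q := ⟨⟨g, fun x => Subgroup.mem_zpowers_iff.mp (by rw [hgtop]; trivial)⟩⟩
    letI : CommGroup Q := IsCyclic.commGroup
    exact mul_comm
  -- conclude
  apply sup_le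
  · rw [Subgroup.closure_le]
    rintro _ ⟨x, -, rfl⟩
    have : ((x : Q)) ^ p = 1 := hypow _
    rw [← QuotientGroup.mk_pow] at this
    exact (QuotientGroup.eq_one_iff _).mp this
  · rw [Subgroup.commutator_le]
    intro a _ b _
    open scoped commutatorElement in
    have : (QuotientGroup.mk' M) ⁅a, b⁆ = 1 := by
      rw [map_commutatorElement]
      exact commutatorElement_eq_one_iff_commute.mpr (hcomm _ _)
    exact (QuotientGroup.eq_one_iff _).mp this


theorem pStep_top_le_frattini {p : ℕ} (hp : p.Prime) {G : Type*} [Group G] [Finite G]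
    (hpg : IsPGroup p G) : pStep p (⊤ : Subgroup G) ≤ frattini G := by
  rw [frattini, Order.radical]
  exact le_iInf₂ fun M hM => pStep_top_le_coatom hp hpg hM

/-- **Proposition: automorphisms of `F/F₂` lift to automorphisms of `H = F/U`** whenever
`U` is a fully invariant subgroup of the free group `F` contained in `F₂` such that `F/U`
is a finite `p`-group: for every `θ ∈ Aut(F/F₂)` there is `θ'' ∈ Aut(F/U)` inducing `θ`
on the quotient `F/F₂` of `F/U`. -/
theorem aut_of_frattini_quotient_lifts (p d : ℕ) (hp : p.Prime) (hd : 1 ≤ d)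
    (U : Subgroup (FreeGroup (Fin d))) [U.Normal]
    (hUfi : FullyInvariant U)
    (hU2 : U ≤ lowerPSeries p (FreeGroup (Fin d)) 2)
    (hfin : Finite (FreeGroup (Fin d) ⧸ U))
    (hpg : IsPGroup p (FreeGroup (Fin d) ⧸ U)) :
    ∀ θ : (FreeGroup (Fin d) ⧸ lowerPSeries p (FreeGroup (Fin d)) 2) ≃*
        (FreeGroup (Fin d) ⧸ lowerPSeries p (FreeGroup (Fin d)) 2),
      ∃ θ'' : (FreeGroup (Fin d) ⧸ U) ≃* (FreeGroup (Fin d) ⧸ U),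
        ∀ x : FreeGroup (Fin d) ⧸ U,
          QuotientGroup.map U (lowerPSeries p (FreeGroup (Fin d)) 2) (MonoidHom.id _)
              (by simpa using hU2) (θ'' x) =
            θ (QuotientGroup.map U (lowerPSeries p (FreeGroup (Fin d)) 2) (MonoidHom.id _)
              (by simpa using hU2) x) := by
  intro θ
  classical
  set F2 := lowerPSeries p (FreeGroup (Fin d)) 2 with hF2
  haveI : F2.Normal := lowerPSeries_normal p _ 2
  set s : (FreeGroup (Fin d) ⧸ F2) → FreeGroup (Fin d) :=
    Function.surjInv (QuotientGroup.mk_surjective (s := F2)) with hsdef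
  have hs : ∀ y, ((s y : FreeGroup (Fin d)) : FreeGroup (Fin d) ⧸ F2) = y :=
    fun y => Function.surjInv_eq _ y
  set φ : FreeGroup (Fin d) →* FreeGroup (Fin d) :=
    FreeGroup.lift (fun i => s (θ ((FreeGroup.of i : FreeGroup (Fin d)) : FreeGroup (Fin d) ⧸ F2)))
    with hφdef
  have hφ : ∀ x : FreeGroup (Fin d),
      ((φ x : FreeGroup (Fin d)) : FreeGroup (Fin d) ⧸ F2) = θ (x : FreeGroup (Fin d) ⧸ F2) := by
    have key : (QuotientGroup.mk' F2).comp φ =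
        (θ.toMonoidHom).comp (QuotientGroup.mk' F2) := by
      apply FreeGroup.ext_hom
      intro i
      simp [hφdef, hs]
    intro x
    exact DFunLike.congr_fun key x
  have hφU : U ≤ U.comap φ := Subgroup.map_le_iff_le_comap.mp (hUfi φ)
  set φ' : (FreeGroup (Fin d) ⧸ U) →* (FreeGroup (Fin d) ⧸ U) := QuotientGroup.map U U φ hφU
    with hφ'def
  set q : (FreeGroup (Fin d) ⧸ U) →* (FreeGroup (Fin d) ⧸ F2) :=
    QuotientGroup.map U F2 (MonoidHom.id _) (by simpa using hU2) with hqdef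
  have hq : ∀ y, q (φ' y) = θ (q y) := by
    intro y
    induction y using QuotientGroup.induction_on with
    | H x =>
      rw [hφ'def, hqdef, QuotientGroup.map_mk, QuotientGroup.map_mk, QuotientGroup.map_mk]
      simpa using hφ x
  have hqsurj : Function.Surjective q := by
    intro z
    obtain ⟨x, rfl⟩ := QuotientGroup.mk_surjective z
    exact ⟨(x : FreeGroup (Fin d) ⧸ U), by rw [hqdef, QuotientGroup.map_mk]; rfl⟩
  have hsup : φ'.range ⊔ q.ker = ⊤ := by
    rw [eq_top_iff]
    rintro y -
    obtain ⟨z, hz⟩ := hqsurj (θ.symm (q y))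
    have h1 : q (φ' z) = q y := by rw [hq, hz]; simp
    have hk : y * (φ' z)⁻¹ ∈ q.ker := by
      rw [MonoidHom.mem_ker, map_mul, map_inv, h1]
      simp
    have hy : y = (y * (φ' z)⁻¹) * φ' z := by group
    rw [hy]
    exact Subgroup.mul_mem _ (Subgroup.mem_sup_right hk) (Subgroup.mem_sup_left ⟨z, rfl⟩)
  have hker : q.ker ≤ frattini (FreeGroup (Fin d) ⧸ U) := by
    have hker_le : q.ker ≤ Subgroup.map (QuotientGroup.mk' U) F2 := by
      intro y hy
      obtain ⟨x, rfl⟩ := QuotientGroup.mk_surjective y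
      rw [MonoidHom.mem_ker, hqdef, QuotientGroup.map_mk] at hy
      have hx : x ∈ F2 := (QuotientGroup.eq_one_iff x).mp (by simpa using hy)
      exact ⟨x, hx, rfl⟩
    have hF2pStep : F2 = pStep p (⊤ : Subgroup (FreeGroup (Fin d))) := rfl
    have hstep : Subgroup.map (QuotientGroup.mk' U) F2 ≤
        pStep p (⊤ : Subgroup (FreeGroup (Fin d) ⧸ U)) := by
      rw [hF2pStep, pStep, pStep, Subgroup.map_sup]
      apply sup_le
      · rw [MonoidHom.map_closure]
        refine le_sup_left.trans' ?_
        apply Subgroup.closure_mono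
        rintro _ ⟨_, ⟨x, -, rfl⟩, rfl⟩
        exact ⟨QuotientGroup.mk' U x, by simp, (map_pow _ x p).symm⟩
      · rw [Subgroup.map_commutator]
        exact le_sup_right.trans' (Subgroup.commutator_mono le_top le_top)
    exact (hker_le.trans hstep).trans (pStep_top_le_frattini hp hpg)
  have hrange : φ'.range = ⊤ := by
    apply frattini_nongenerating
    exact le_antisymm le_top (hsup.ge.trans (sup_le_sup_left hker _))
  have hsurj : Function.Surjective φ' := MonoidHom.range_eq_top.mp hrange
  have hbij : Function.Bijective φ' := Finite.surjective_iff_bijective.mp hsurj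
  refine ⟨MulEquiv.ofBijective φ' hbij, ?_⟩
  intro x
  exact hq x
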